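/- Let K = ℂ², let T₁ be the diagonal operator diag(1, 1/2) on ℂ² and T₂ the diagonal operator diag(1, 1/3) on ℂ², and put H = K ⊕ K. Then T₁ and T₂ are not similar (there is no invertible linear operator W on ℂ² with T₂ = W T₁ W^{-1}), but the systems (H; K ⊕ 0, graph(T₁)) and (H; K ⊕ 0, graph(T₂)) are boundedly isomorphic. -/

import Mathlib

/- STATEMENT 12: On K = ℂ², the diagonal operators T₁ = diag(1, 1/2) and
T₂ = diag(1, 1/3) are not similar, but the systems (K ⊕ K; K ⊕ 0, graph T₁) and
(K ⊕ K; K ⊕ 0, graph T₂) are boundedly isomorphic. -/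

noncomputable section

/-- The diagonal operator diag(1, 1/2) on ℂ². -/
def T₁ : (Fin 2 → ℂ) →ₗ[ℂ] (Fin 2 → ℂ) := Matrix.toLin' (Matrix.diagonal ![1, 1/2])

/-- The diagonal operator diag(1, 1/3) on ℂ². -/
def T₂ : (Fin 2 → ℂ) →ₗ[ℂ] (Fin 2 → ℂ) := Matrix.toLin' (Matrix.diagonal ![1, 1/3])

/-- The diagonal equivalence diag(1, 2/3) on ℂ². -/
def Dlin : (Fin 2 → ℂ) ≃ₗ[ℂ] (Fin 2 → ℂ) :=
  LinearEquiv.piCongrRight fun i =>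
    LinearEquiv.smulOfNeZero ℂ ℂ (![1, 2/3] i) (by fin_cases i <;> norm_num)

lemma Dlin_apply (x : Fin 2 → ℂ) (i : Fin 2) : Dlin x i = ![1, 2/3] i * x i := rfl

lemma Dlin_T₁ (x : Fin 2 → ℂ) : Dlin (T₁ x) = T₂ x := by
  funext i
  rw [Dlin_apply]
  simp only [T₁, T₂, Matrix.toLin'_apply, Matrix.mulVec_diagonal]
  fin_cases i <;> norm_num <;> ring

theorem not_similar_but_boundedly_isomorphic :
    (¬ ∃ W : (Fin 2 → ℂ) ≃ₗ[ℂ] (Fin 2 → ℂ), ∀ x, T₂ x = W (T₁ (W.symm x))) ∧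
    (∃ V : ((Fin 2 → ℂ) × (Fin 2 → ℂ)) ≃L[ℂ] ((Fin 2 → ℂ) × (Fin 2 → ℂ)),
      V '' (((⊤ : Submodule ℂ (Fin 2 → ℂ)).prod (⊥ : Submodule ℂ (Fin 2 → ℂ))) :
          Set ((Fin 2 → ℂ) × (Fin 2 → ℂ))) =
        (((⊤ : Submodule ℂ (Fin 2 → ℂ)).prod (⊥ : Submodule ℂ (Fin 2 → ℂ))) :
          Set ((Fin 2 → ℂ) × (Fin 2 → ℂ))) ∧
      V '' ((LinearMap.graph T₁) : Set ((Fin 2 → ℂ) × (Fin 2 → ℂ))) =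
        ((LinearMap.graph T₂) : Set ((Fin 2 → ℂ) × (Fin 2 → ℂ)))) := by
  constructor
  · rintro ⟨W, hW⟩
    have hconj : T₂ = W.conj T₁ := LinearMap.ext fun x => by
      simpa [LinearEquiv.conj_apply] using hW x
    have htr : LinearMap.trace ℂ _ T₂ = LinearMap.trace ℂ _ T₁ := by
      rw [hconj, LinearMap.trace_conj']
    have h1 : LinearMap.trace ℂ _ T₁ = (3/2 : ℂ) := by
      rw [LinearMap.trace_eq_matrix_trace ℂ (Pi.basisFun ℂ (Fin 2)),
        LinearMap.toMatrix_eq_toMatrix', T₁, LinearMap.toMatrix'_toLin']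
      simp [Matrix.trace, Matrix.diag, Fin.sum_univ_two]
      norm_num
    have h2 : LinearMap.trace ℂ _ T₂ = (4/3 : ℂ) := by
      rw [LinearMap.trace_eq_matrix_trace ℂ (Pi.basisFun ℂ (Fin 2)),
        LinearMap.toMatrix_eq_toMatrix', T₂, LinearMap.toMatrix'_toLin']
      simp [Matrix.trace, Matrix.diag, Fin.sum_univ_two]
      norm_num
    rw [h1, h2] at htr
    norm_num at htr
  · refine ⟨(ContinuousLinearEquiv.refl ℂ (Fin 2 → ℂ)).prodCongr
      Dlin.toContinuousLinearEquiv, ?_, ?_⟩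
    · ext p
      constructor
      · rintro ⟨⟨x, y⟩, hxy, rfl⟩
        simp only [SetLike.mem_coe, Submodule.mem_prod, Submodule.mem_top,
          Submodule.mem_bot, true_and] at hxy ⊢
        simp [hxy]
      · intro hp
        simp only [SetLike.mem_coe, Submodule.mem_prod, Submodule.mem_top,
          Submodule.mem_bot, true_and] at hp
        exact ⟨(p.1, 0), by simp, by simp [hp, Prod.ext_iff]⟩
    · ext p
      constructor
      · rintro ⟨⟨x, y⟩, hxy, rfl⟩
        rw [SetLike.mem_coe, LinearMap.mem_graph_iff] at hxy
        obtain rfl : y = T₁ x := hxy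
        simp only [ContinuousLinearEquiv.prodCongr_apply, ContinuousLinearEquiv.refl_apply,
          LinearEquiv.coe_toContinuousLinearEquiv', SetLike.mem_coe, LinearMap.mem_graph_iff]
        exact Dlin_T₁ x
      · intro hp
        rw [SetLike.mem_coe, LinearMap.mem_graph_iff] at hp
        refine ⟨(p.1, T₁ p.1), by simp [LinearMap.mem_graph_iff], ?_⟩
        simp only [ContinuousLinearEquiv.prodCongr_apply, ContinuousLinearEquiv.refl_apply,
          LinearEquiv.coe_toContinuousLinearEquiv']
        rw [Dlin_T₁, ← hp]

end
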